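/- Let ρ_x, σ_x, ρ_y, σ_y be m×m density matrices (positive semidefinite with trace 1). If ‖ρ_x − σ_x‖₁ ≥ 4/3 and ‖ρ_y − σ_y‖₁ ≤ 2/3, then ‖ρ_x ⊗ σ_x − ρ_y ⊗ σ_y‖₁ ≥ 1/3, where ⊗ denotes the Kronecker product. (In trace-distance normalization: if the trace distance between ρ_x and σ_x is at least 2/3 and the trace distance between ρ_y and σ_y is at most 1/3, then ρ_x ⊗ σ_x and ρ_y ⊗ σ_y are at trace distance at least 1/6.) -/

import Mathlib

open scoped ComplexOrder

/-- The trace norm of a complex square matrix `A`: the trace of `√(Aᴴ A)`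
(equivalently, the sum of the singular values of `A`). -/
noncomputable def traceNorm {m : Type*} [Fintype m] [DecidableEq m] (A : Matrix m m ℂ) : ℝ :=
  ((Matrix.posSemidef_conjTranspose_mul_self A).1.eigenvectorUnitary.1 *
    Matrix.diagonal (((↑) : ℝ → ℂ) ∘ (√·) ∘ (Matrix.posSemidef_conjTranspose_mul_self A).1.eigenvalues) *
    (star (Matrix.posSemidef_conjTranspose_mul_self A).1.eigenvectorUnitary : Matrix m m ℂ)).trace.re

open Matrix
open scoped MatrixOrder

namespace TNaux
variable {n : Type*} [Fintype n] [DecidableEq n]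

lemma traceNorm_eq_cfc (A : Matrix n n ℂ) :
    traceNorm A = (cfc Real.sqrt (Aᴴ * A)).trace.re := by
  rw [(posSemidef_conjTranspose_mul_self A).1.cfc_eq]; rfl

lemma traceNorm_neg (A : Matrix n n ℂ) : traceNorm (-A) = traceNorm A := by
  rw [traceNorm_eq_cfc, traceNorm_eq_cfc]; simp

lemma psd_diag_re_nonneg {N : Matrix n n ℂ} (hN : N.PosSemidef) (i : n) : 0 ≤ (N i i).re := by
  exact (Complex.le_def.mp (hN.diag_nonneg (i := i))).1


lemma traceNorm_eq_sum_abs {X : Matrix n n ℂ} (hX : X.IsHermitian) :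
    traceNorm X = ∑ i, |hX.eigenvalues i| := by
  set U : Matrix n n ℂ := (hX.eigenvectorUnitary : Matrix n n ℂ) with hUdef
  set lam := hX.eigenvalues
  have hU : U * Uᴴ = 1 := by
    simpa [hUdef, Matrix.star_eq_conjTranspose] using
      Unitary.mul_star_self_of_mem hX.eigenvectorUnitary.2
  have hU' : Uᴴ * U = 1 := by
    simpa [hUdef, Matrix.star_eq_conjTranspose] using
      Unitary.star_mul_self_of_mem hX.eigenvectorUnitary.2
  set S : Matrix n n ℂ := U * diagonal (fun i => ((|lam i| : ℝ) : ℂ)) * Uᴴ with hS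
  have hSpsd : S.PosSemidef := by
    apply Matrix.PosSemidef.mul_mul_conjTranspose_same
    refine posSemidef_diagonal_iff.mpr fun i => ?_
    simpa using Complex.ofReal_nonneg.mpr (abs_nonneg _)
  have hXd : X = U * diagonal (Complex.ofReal ∘ lam) * Uᴴ := by
    simpa [hUdef, Matrix.star_eq_conjTranspose] using hX.spectral_theorem
  have hsq : S ^ 2 = Xᴴ * X := by
    have hXH : Xᴴ = X := hX.eq
    rw [pow_two, hS, hXH, hXd]
    calc (U * diagonal (fun i => ((|lam i| : ℝ) : ℂ)) * Uᴴ) *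
          (U * diagonal (fun i => ((|lam i| : ℝ) : ℂ)) * Uᴴ)
        = U * (diagonal (fun i => ((|lam i| : ℝ) : ℂ)) * (Uᴴ * U) *
            diagonal (fun i => ((|lam i| : ℝ) : ℂ))) * Uᴴ := by
          simp only [Matrix.mul_assoc]
      _ = U * (diagonal (Complex.ofReal ∘ lam) * (Uᴴ * U) * diagonal (Complex.ofReal ∘ lam)) * Uᴴ := by
          rw [hU']
          congr 1
          congr 1
          rw [Matrix.mul_one, Matrix.mul_one, Matrix.diagonal_mul_diagonal,
            Matrix.diagonal_mul_diagonal]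
          congr 1
          funext i
          simp [← Complex.ofReal_mul, ← abs_mul, abs_mul_self, Function.comp]
      _ = (U * diagonal (Complex.ofReal ∘ lam) * Uᴴ) * (U * diagonal (Complex.ofReal ∘ lam) * Uᴴ) := by
          simp only [Matrix.mul_assoc]
  have : CFC.sqrt (Xᴴ * X) = S := CFC.sqrt_unique (by rw [← hsq, pow_two]) hSpsd.nonneg
  rw [CFC.sqrt_eq_real_sqrt _ (Matrix.posSemidef_conjTranspose_mul_self X).nonneg,
    cfcₙ_eq_cfc (hf0 := Real.sqrt_zero)] at this
  rw [traceNorm_eq_cfc, this, hS]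
  rw [Matrix.trace_mul_cycle, hU', Matrix.one_mul, Matrix.trace_diagonal]
  simp

lemma trace_eq_sum_eig {X : Matrix n n ℂ} (hX : X.IsHermitian) :
    X.trace = ∑ i, (hX.eigenvalues i : ℂ) := by
  set U : Matrix n n ℂ := (hX.eigenvectorUnitary : Matrix n n ℂ) with hUdef
  have hU' : Uᴴ * U = 1 := by
    simpa [hUdef, Matrix.star_eq_conjTranspose] using
      Unitary.star_mul_self_of_mem hX.eigenvectorUnitary.2
  have hXd : X = U * diagonal (Complex.ofReal ∘ hX.eigenvalues) * Uᴴ := by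
    simpa [hUdef, Matrix.star_eq_conjTranspose] using hX.spectral_theorem
  calc X.trace = (U * diagonal (Complex.ofReal ∘ hX.eigenvalues) * Uᴴ).trace := by rw [← hXd]
    _ = _ := by
      rw [Matrix.trace_mul_cycle, hU', Matrix.one_mul, Matrix.trace_diagonal]
      rfl

-- duality upper bound
lemma two_trace_mul_re_le {X M : Matrix n n ℂ} (hX : X.IsHermitian)
    (hM : M.PosSemidef) (hM1 : (1 - M).PosSemidef) :
    2 * (M * X).trace.re ≤ traceNorm X + X.trace.re := by
  set U : Matrix n n ℂ := (hX.eigenvectorUnitary : Matrix n n ℂ) with hUdef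
  set lam := hX.eigenvalues with hlam
  have hU : U * Uᴴ = 1 := by
    simpa [hUdef, Matrix.star_eq_conjTranspose] using
      Unitary.mul_star_self_of_mem hX.eigenvectorUnitary.2
  have hU' : Uᴴ * U = 1 := by
    simpa [hUdef, Matrix.star_eq_conjTranspose] using
      Unitary.star_mul_self_of_mem hX.eigenvectorUnitary.2
  have hXd : X = U * diagonal (Complex.ofReal ∘ lam) * Uᴴ := by
    simpa [hUdef, Matrix.star_eq_conjTranspose] using hX.spectral_theorem
  set N : Matrix n n ℂ := Uᴴ * M * U with hN
  have hNpsd : N.PosSemidef := hM.conjTranspose_mul_mul_same U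
  have hN1psd : ((1 : Matrix n n ℂ) - N).PosSemidef := by
    have : (1 : Matrix n n ℂ) - N = Uᴴ * (1 - M) * U := by
      rw [Matrix.mul_sub, Matrix.mul_one, Matrix.sub_mul, hU']
    rw [this]
    exact hM1.conjTranspose_mul_mul_same U
  have htr : (M * X).trace = (N * diagonal (Complex.ofReal ∘ lam)).trace := by
    rw [hXd, hN]
    rw [show M * (U * diagonal (Complex.ofReal ∘ lam) * Uᴴ)
        = M * U * diagonal (Complex.ofReal ∘ lam) * Uᴴ by simp only [Matrix.mul_assoc]]
    rw [Matrix.trace_mul_cycle]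
    simp only [Matrix.mul_assoc]
  have hdiag : (N * diagonal (Complex.ofReal ∘ lam)).trace
      = ∑ i, N i i * (lam i : ℂ) := by
    rw [Matrix.trace]
    congr 1; funext i
    simp [Matrix.diag, Matrix.mul_diagonal]
  have hre : (M * X).trace.re = ∑ i, (N i i).re * lam i := by
    rw [htr, hdiag, Complex.re_sum]
    congr 1; funext i
    simp [Complex.mul_re]
  have hXtr : X.trace.re = ∑ i, lam i := by
    rw [trace_eq_sum_eig hX, Complex.re_sum]; simp [hlam]
  have hTN : traceNorm X = ∑ i, |lam i| := traceNorm_eq_sum_abs hX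
  rw [hre, hXtr, hTN, Finset.mul_sum, ← Finset.sum_add_distrib]
  apply Finset.sum_le_sum
  intro i _
  have h0 : 0 ≤ (N i i).re := psd_diag_re_nonneg hNpsd i
  have h1 : (N i i).re ≤ 1 := by
    have := psd_diag_re_nonneg hN1psd i
    simp only [Matrix.sub_apply, Matrix.one_apply_eq, Complex.sub_re, Complex.one_re] at this
    linarith
  rcases le_or_gt 0 (lam i) with h | h
  · nlinarith [abs_of_nonneg h]
  · nlinarith [abs_of_neg h]


lemma exists_optimal {X : Matrix n n ℂ} (hX : X.IsHermitian) :
    ∃ M : Matrix n n ℂ, M.PosSemidef ∧ ((1 : Matrix n n ℂ) - M).PosSemidef ∧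
      2 * (M * X).trace.re = traceNorm X + X.trace.re := by
  set U : Matrix n n ℂ := (hX.eigenvectorUnitary : Matrix n n ℂ) with hUdef
  set lam := hX.eigenvalues with hlam
  have hU : U * Uᴴ = 1 := by
    simpa [hUdef, Matrix.star_eq_conjTranspose] using
      Unitary.mul_star_self_of_mem hX.eigenvectorUnitary.2
  have hU' : Uᴴ * U = 1 := by
    simpa [hUdef, Matrix.star_eq_conjTranspose] using
      Unitary.star_mul_self_of_mem hX.eigenvectorUnitary.2
  have hXd : X = U * diagonal (Complex.ofReal ∘ lam) * Uᴴ := by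
    simpa [hUdef, Matrix.star_eq_conjTranspose] using hX.spectral_theorem
  set c : n → ℂ := fun i => if 0 ≤ lam i then 1 else 0 with hc
  refine ⟨U * diagonal c * Uᴴ, ?_, ?_, ?_⟩
  · apply Matrix.PosSemidef.mul_mul_conjTranspose_same
    refine posSemidef_diagonal_iff.mpr fun i => ?_
    by_cases h : 0 ≤ lam i <;> simp [hc, h]
  · have h1 : (1 : Matrix n n ℂ) - U * diagonal c * Uᴴ
        = U * diagonal (fun i => 1 - c i) * Uᴴ := by
      have : diagonal (fun i => (1 : ℂ) - c i) = 1 - diagonal c := by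
        rw [← Matrix.diagonal_one, Matrix.diagonal_sub]
      rw [this, Matrix.mul_sub, Matrix.mul_one, Matrix.sub_mul, hU]
    rw [h1]
    apply Matrix.PosSemidef.mul_mul_conjTranspose_same
    refine posSemidef_diagonal_iff.mpr fun i => ?_
    by_cases h : 0 ≤ lam i <;> simp [hc, h]
  · have hmul : U * diagonal c * Uᴴ * X = U * diagonal (fun i => c i * (lam i : ℂ)) * Uᴴ := by
      rw [hXd]
      calc U * diagonal c * Uᴴ * (U * diagonal (Complex.ofReal ∘ lam) * Uᴴ)
          = U * (diagonal c * (Uᴴ * U) * diagonal (Complex.ofReal ∘ lam)) * Uᴴ := by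
            simp only [Matrix.mul_assoc]
        _ = U * diagonal (fun i => c i * (lam i : ℂ)) * Uᴴ := by
            rw [hU', Matrix.mul_one, Matrix.diagonal_mul_diagonal]
            rfl
    have htr : (U * diagonal c * Uᴴ * X).trace = ∑ i, c i * (lam i : ℂ) := by
      rw [hmul, Matrix.trace_mul_cycle, hU', Matrix.one_mul, Matrix.trace_diagonal]
    have hXtr : X.trace.re = ∑ i, lam i := by
      rw [trace_eq_sum_eig hX, Complex.re_sum]; simp [hlam]
    rw [htr, hXtr, traceNorm_eq_sum_abs hX, Complex.re_sum, Finset.mul_sum,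
      ← Finset.sum_add_distrib]
    apply Finset.sum_congr rfl
    intro i _
    rw [hc, ← hlam]
    rcases le_or_gt 0 (lam i) with h | h
    · simp [h, abs_of_nonneg h]; ring
    · simp [not_le.mpr h, abs_of_neg h]

open Kronecker

variable {p : Type*} [Fintype p] [DecidableEq p]

lemma kron_conjTranspose (A : Matrix n n ℂ) (B : Matrix p p ℂ) :
    (A ⊗ₖ B)ᴴ = Aᴴ ⊗ₖ Bᴴ := by
  ext ⟨i, i'⟩ ⟨j, j'⟩
  simp [Matrix.conjTranspose_apply, Matrix.kroneckerMap_apply]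

lemma kron_psd {A : Matrix n n ℂ} {B : Matrix p p ℂ} (hA : A.PosSemidef) (hB : B.PosSemidef) :
    (A ⊗ₖ B).PosSemidef := by
  exact hA.kronecker hB

lemma sub_kron (A B : Matrix n n ℂ) (C : Matrix p p ℂ) :
    (A - B) ⊗ₖ C = A ⊗ₖ C - B ⊗ₖ C := by
  ext ⟨i, i'⟩ ⟨j, j'⟩
  simp [Matrix.kroneckerMap_apply, sub_mul]

lemma kron_sub (A : Matrix n n ℂ) (B C : Matrix p p ℂ) :
    A ⊗ₖ (B - C) = A ⊗ₖ B - A ⊗ₖ C := by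
  ext ⟨i, i'⟩ ⟨j, j'⟩
  simp [Matrix.kroneckerMap_apply, mul_sub]

end TNaux

open Kronecker in
theorem traceNorm_kron_pair_ge_of_far_and_close {m : Type*} [Fintype m] [DecidableEq m]
    (ρx σx ρy σy : Matrix m m ℂ)
    (hρx : ρx.PosSemidef) (hρxt : ρx.trace = 1)
    (hσx : σx.PosSemidef) (hσxt : σx.trace = 1)
    (hρy : ρy.PosSemidef) (hρyt : ρy.trace = 1)
    (hσy : σy.PosSemidef) (hσyt : σy.trace = 1)
    (hfar : traceNorm (ρx - σx) ≥ 4 / 3) (hclose : traceNorm (ρy - σy) ≤ 2 / 3) :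
    traceNorm (ρx ⊗ₖ σx - ρy ⊗ₖ σy) ≥ 1 / 3 := by
  classical
  have hXx : (ρx - σx).IsHermitian := hρx.1.sub hσx.1
  have hYy : (ρy - σy).IsHermitian := hρy.1.sub hσy.1
  have hA : (ρx - ρy).IsHermitian := hρx.1.sub hρy.1
  have hB : (σx - σy).IsHermitian := hσx.1.sub hσy.1
  have hBA : (σy - σx).IsHermitian := hσy.1.sub hσx.1
  have hΔ : (ρx ⊗ₖ σx - ρy ⊗ₖ σy).IsHermitian := by
    have h1 : (ρx ⊗ₖ σx).IsHermitian := by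
      have := TNaux.kron_conjTranspose ρx σx
      rw [hρx.1.eq, hσx.1.eq] at this
      exact this
    have h2 : (ρy ⊗ₖ σy).IsHermitian := by
      have := TNaux.kron_conjTranspose ρy σy
      rw [hρy.1.eq, hσy.1.eq] at this
      exact this
    exact h1.sub h2
  have hΔt : (ρx ⊗ₖ σx - ρy ⊗ₖ σy).trace = 0 := by
    rw [trace_sub, Matrix.trace_kronecker, Matrix.trace_kronecker, hρxt, hσxt, hρyt, hσyt]
    ring
  have htx : (ρx - σx).trace = 0 := by rw [trace_sub, hρxt, hσxt]; ring
  have hty : (ρy - σy).trace = 0 := by rw [trace_sub, hρyt, hσyt]; ring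
  have htA : (ρx - ρy).trace = 0 := by rw [trace_sub, hρxt, hρyt]; ring
  have htB : (σx - σy).trace = 0 := by rw [trace_sub, hσxt, hσyt]; ring
  have htBA : (σy - σx).trace = 0 := by rw [trace_sub, hσyt, hσxt]; ring
  set a := traceNorm (ρx - ρy) with ha
  set b := traceNorm (σx - σy) with hb
  have hnegσ : traceNorm (σy - σx) = b := by
    rw [show σy - σx = -(σx - σy) by abel, TNaux.traceNorm_neg]
  -- triangle inequality step
  have hab : a + b ≥ 2 / 3 := by
    obtain ⟨M₀, hM₀, hM₀1, hM₀e⟩ := TNaux.exists_optimal hXx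
    have hsplit : (M₀ * (ρx - σx)).trace.re
        = (M₀ * (ρx - ρy)).trace.re + (M₀ * (ρy - σy)).trace.re
          + (M₀ * (σy - σx)).trace.re := by
      have hsum : ρx - σx = (ρx - ρy) + ((ρy - σy) + (σy - σx)) := by abel
      rw [hsum, Matrix.mul_add, Matrix.mul_add, trace_add, trace_add]
      simp [Complex.add_re]
      ring
    have b1 := TNaux.two_trace_mul_re_le hA hM₀ hM₀1
    have b2 := TNaux.two_trace_mul_re_le hYy hM₀ hM₀1
    have b3 := TNaux.two_trace_mul_re_le hBA hM₀ hM₀1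
    rw [htA] at b1; rw [hty] at b2; rw [htBA] at b3
    rw [htx] at hM₀e
    simp only [Complex.zero_re, add_zero] at hM₀e b1 b2 b3
    rw [hnegσ] at b3
    have : traceNorm (ρx - σx) ≤ a + traceNorm (ρy - σy) + b := by
      rw [← hM₀e, hsplit]; linarith
    linarith
  rcases le_or_gt (1/3 : ℝ) a with hcase | hcase
  · -- use W = M ⊗ₖ 1
    obtain ⟨M, hM, hM1, hMe⟩ := TNaux.exists_optimal hA
    rw [htA] at hMe
    simp only [Complex.zero_re, add_zero] at hMe
    have hW : ((M ⊗ₖ (1 : Matrix m m ℂ))).PosSemidef :=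
      TNaux.kron_psd hM Matrix.PosSemidef.one
    have hW1 : ((1 : Matrix (m × m) (m × m) ℂ) - M ⊗ₖ (1 : Matrix m m ℂ)).PosSemidef := by
      have : (1 : Matrix (m × m) (m × m) ℂ) - M ⊗ₖ (1 : Matrix m m ℂ)
          = ((1 : Matrix m m ℂ) - M) ⊗ₖ (1 : Matrix m m ℂ) := by
        rw [TNaux.sub_kron, Matrix.one_kronecker_one]
      rw [this]
      exact TNaux.kron_psd hM1 Matrix.PosSemidef.one
    have key := TNaux.two_trace_mul_re_le hΔ hW hW1
    rw [hΔt] at key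
    simp only [Complex.zero_re, add_zero] at key
    have htrW : ((M ⊗ₖ (1 : Matrix m m ℂ)) * (ρx ⊗ₖ σx - ρy ⊗ₖ σy)).trace
        = (M * (ρx - ρy)).trace := by
      rw [Matrix.mul_sub, trace_sub, ← Matrix.mul_kronecker_mul, ← Matrix.mul_kronecker_mul,
        Matrix.trace_kronecker, Matrix.trace_kronecker, Matrix.one_mul, Matrix.one_mul,
        hσxt, hσyt, Matrix.mul_sub, trace_sub]
      ring
    rw [htrW] at key
    linarith
  · have hbge : b ≥ 1/3 := by linarith
    obtain ⟨M, hM, hM1, hMe⟩ := TNaux.exists_optimal hB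
    rw [htB] at hMe
    simp only [Complex.zero_re, add_zero] at hMe
    have hW : (((1 : Matrix m m ℂ) ⊗ₖ M)).PosSemidef :=
      TNaux.kron_psd Matrix.PosSemidef.one hM
    have hW1 : ((1 : Matrix (m × m) (m × m) ℂ) - (1 : Matrix m m ℂ) ⊗ₖ M).PosSemidef := by
      have : (1 : Matrix (m × m) (m × m) ℂ) - (1 : Matrix m m ℂ) ⊗ₖ M
          = (1 : Matrix m m ℂ) ⊗ₖ ((1 : Matrix m m ℂ) - M) := by
        rw [TNaux.kron_sub, Matrix.one_kronecker_one]
      rw [this]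
      exact TNaux.kron_psd Matrix.PosSemidef.one hM1
    have key := TNaux.two_trace_mul_re_le hΔ hW hW1
    rw [hΔt] at key
    simp only [Complex.zero_re, add_zero] at key
    have htrW : (((1 : Matrix m m ℂ) ⊗ₖ M) * (ρx ⊗ₖ σx - ρy ⊗ₖ σy)).trace
        = (M * (σx - σy)).trace := by
      rw [Matrix.mul_sub, trace_sub, ← Matrix.mul_kronecker_mul, ← Matrix.mul_kronecker_mul,
        Matrix.trace_kronecker, Matrix.trace_kronecker, Matrix.one_mul, Matrix.one_mul,
        hρxt, hρyt, Matrix.mul_sub, trace_sub]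
      ring
    rw [htrW] at key
    linarith
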